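/- Let E ⊂ ℝ^d be a nonempty compact set and θ ∈ (0,1]. If the upper θ-intermediate dimension of E is positive, then for every s with 0 < s < upper-dim_θ(E) there exists a constant c > 0 such that for every δ₀ > 0 there exist δ ∈ (0, δ₀) and a Borel probability measure μ_δ supported on E satisfying μ_δ(B(x,r)) ≤ c·r^s for all x ∈ E and all r with δ^{1/θ} ≤ r ≤ δ. -/

import Mathlib

open Metric MeasureTheory Set

/-- An admissible cover of `F` at scale `δ` with exponent `s` and total cost at most `ε`:
a finite cover by sets whose diameters lie in `[δ^(1/θ), δ]` and whose `s`-power sum of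
diameters is at most `ε`. -/
def IsAdmissibleCover {d : ℕ} (θ δ s ε : ℝ) (F : Set (EuclideanSpace ℝ (Fin d))) : Prop :=
  ∃ (n : ℕ) (U : Fin n → Set (EuclideanSpace ℝ (Fin d))),
    F ⊆ ⋃ i, U i ∧
    (∀ i, δ ^ (1 / θ) ≤ Metric.diam (U i) ∧ Metric.diam (U i) ≤ δ) ∧
    ∑ i, Metric.diam (U i) ^ s ≤ ε

/-- The upper θ-intermediate dimension of `F`. -/
noncomputable def upperIntermediateDim {d : ℕ} (θ : ℝ) (F : Set (EuclideanSpace ℝ (Fin d))) : ℝ :=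
  sInf {s : ℝ | 0 ≤ s ∧ ∀ ε > 0, ∃ δ₀ > 0, ∀ δ : ℝ, 0 < δ → δ ≤ δ₀ →
    IsAdmissibleCover θ δ s ε F}

namespace FrostmanAux


variable {d : ℕ}

/-- parent index of a dyadic cube -/
def anc (c : Fin d → ℤ) : Fin d → ℤ := fun i => c i / 2

/-- half-open cube with side `ℓ` and lower corner `c * ℓ` -/
def cube (ℓ : ℝ) (c : Fin d → ℤ) : Set (EuclideanSpace ℝ (Fin d)) :=
  {x | ∀ i, (c i : ℝ) * ℓ ≤ x i ∧ x i < ((c i : ℝ) + 1) * ℓ}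

/-- closed cube -/
def ccube (ℓ : ℝ) (c : Fin d → ℤ) : Set (EuclideanSpace ℝ (Fin d)) :=
  {x | ∀ i, (c i : ℝ) * ℓ ≤ x i ∧ x i ≤ ((c i : ℝ) + 1) * ℓ}

lemma mem_cube_iff_floor {ℓ : ℝ} (hℓ : 0 < ℓ) {c : Fin d → ℤ} {x : EuclideanSpace ℝ (Fin d)} :
    x ∈ cube ℓ c ↔ ∀ i, c i = ⌊x i / ℓ⌋ := by
  unfold cube
  simp only [Set.mem_setOf_eq]
  refine forall_congr' fun i => ?_
  rw [eq_comm, Int.floor_eq_iff, le_div_iff₀ hℓ, div_lt_iff₀ hℓ]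

lemma cube_eq_of_mem {ℓ : ℝ} (hℓ : 0 < ℓ) {c c' : Fin d → ℤ} {x : EuclideanSpace ℝ (Fin d)}
    (h : x ∈ cube ℓ c) (h' : x ∈ cube ℓ c') : c = c' := by
  rw [mem_cube_iff_floor hℓ] at h h'
  funext i; rw [h i, h' i]

def corner (ℓ : ℝ) (c : Fin d → ℤ) : EuclideanSpace ℝ (Fin d) := WithLp.toLp 2 fun i => (c i : ℝ) * ℓ

lemma corner_apply (ℓ : ℝ) (c : Fin d → ℤ) (i : Fin d) : corner ℓ c i = (c i : ℝ) * ℓ := rfl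

lemma corner_mem_cube {ℓ : ℝ} (hℓ : 0 < ℓ) (c : Fin d → ℤ) : corner ℓ c ∈ cube ℓ c := by
  intro i
  refine ⟨le_refl _, ?_⟩
  have : (c i : ℝ) * ℓ < ((c i : ℝ) + 1) * ℓ := by nlinarith
  exact this

lemma mem_cube_anc {ℓ : ℝ} {c : Fin d → ℤ} {x : EuclideanSpace ℝ (Fin d)}
    (hℓ : 0 < ℓ) (h : x ∈ cube ℓ c) : x ∈ cube (2 * ℓ) (anc c) := by
  intro i
  obtain ⟨h1, h2⟩ := h i
  have key : 2 * (c i / 2) ≤ c i ∧ c i ≤ 2 * (c i / 2) + 1 := by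
    have h0 := Int.mul_ediv_add_emod (c i) 2
    have hm0 : 0 ≤ c i % 2 := Int.emod_nonneg _ (by norm_num)
    have hm1 : c i % 2 < 2 := Int.emod_lt_of_pos _ (by norm_num)
    omega
  obtain ⟨k1, k2⟩ := key
  have k1' : ((2 * (c i / 2) : ℤ) : ℝ) ≤ (c i : ℝ) := by exact_mod_cast k1
  have k2' : ((c i : ℝ) + 1) ≤ ((2 * (c i / 2) : ℤ) : ℝ) + 2 := by
    have : ((c i : ℤ) : ℝ) ≤ ((2 * (c i / 2) + 1 : ℤ) : ℝ) := by exact_mod_cast k2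
    push_cast at this ⊢
    linarith
  constructor
  · show ((anc c i : ℝ)) * (2 * ℓ) ≤ x i
    unfold anc
    push_cast at k1' ⊢
    nlinarith
  · show x i < ((anc c i : ℝ) + 1) * (2 * ℓ)
    unfold anc
    push_cast at k2' ⊢
    nlinarith

lemma mem_cube_anc_iter {ℓ : ℝ} (hℓ : 0 < ℓ) (k : ℕ) {c : Fin d → ℤ}
    {x : EuclideanSpace ℝ (Fin d)} (h : x ∈ cube ℓ c) :
    x ∈ cube ((2 : ℝ) ^ k * ℓ) (anc^[k] c) := by
  induction k with
  | zero => simpa using h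
  | succ n ih =>
      have h2 : x ∈ cube (2 * ((2:ℝ)^n * ℓ)) (anc (anc^[n] c)) :=
        mem_cube_anc (by positivity) ih
      rw [Function.iterate_succ_apply']
      convert h2 using 2
      ring

lemma cube_subset_ccube (ℓ : ℝ) (c : Fin d → ℤ) : cube ℓ c ⊆ ccube ℓ c :=
  fun x hx i => ⟨(hx i).1, le_of_lt (hx i).2⟩

lemma ccube_subset_closedBall {ℓ : ℝ} (hℓ : 0 ≤ ℓ) (c : Fin d → ℤ) :
    ccube ℓ c ⊆ Metric.closedBall (corner ℓ c) (Real.sqrt d * ℓ) := by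
  intro x hx
  rw [Metric.mem_closedBall, EuclideanSpace.dist_eq]
  have hb : ∀ i, dist (x i) (corner ℓ c i) ^ 2 ≤ ℓ ^ 2 := by
    intro i
    obtain ⟨h1, h2⟩ := hx i
    rw [Real.dist_eq]
    have : |x i - corner ℓ c i| ≤ ℓ := by
      rw [abs_le]; rw [corner_apply]; constructor <;> [linarith; linarith]
    nlinarith [abs_nonneg (x i - corner ℓ c i)]
  calc √(∑ i, dist (x i) (corner ℓ c i) ^ 2) ≤ √(∑ _i : Fin d, ℓ ^ 2) :=
        Real.sqrt_le_sqrt (Finset.sum_le_sum fun i _ => hb i)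
    _ = Real.sqrt d * ℓ := by
        rw [Finset.sum_const, Finset.card_univ, Fintype.card_fin, nsmul_eq_mul,
          Real.sqrt_mul (by positivity), Real.sqrt_sq hℓ]

lemma diam_ccube {ℓ : ℝ} (hℓ : 0 ≤ ℓ) (c : Fin d → ℤ) :
    Metric.diam (ccube ℓ c) = Real.sqrt d * ℓ := by
  have hbdd : Bornology.IsBounded (ccube ℓ c) :=
    (Metric.isBounded_closedBall).subset (ccube_subset_closedBall hℓ c)
  refine le_antisymm ?_ ?_
  · refine Metric.diam_le_of_forall_dist_le (by positivity) ?_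
    intro x hx y hy
    rw [EuclideanSpace.dist_eq]
    have hb : ∀ i, dist (x i) (y i) ^ 2 ≤ ℓ ^ 2 := by
      intro i
      obtain ⟨h1, h2⟩ := hx i
      obtain ⟨h3, h4⟩ := hy i
      rw [Real.dist_eq]
      have : |x i - y i| ≤ ℓ := by rw [abs_le]; constructor <;> linarith
      nlinarith [abs_nonneg (x i - y i)]
    calc √(∑ i, dist (x i) (y i) ^ 2) ≤ √(∑ _i : Fin d, ℓ ^ 2) :=
          Real.sqrt_le_sqrt (Finset.sum_le_sum fun i _ => hb i)
      _ = Real.sqrt d * ℓ := by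
          rw [Finset.sum_const, Finset.card_univ, Fintype.card_fin, nsmul_eq_mul,
            Real.sqrt_mul (by positivity), Real.sqrt_sq hℓ]
  · have h1 : corner ℓ c ∈ ccube ℓ c := by
      intro i
      show (c i : ℝ) * ℓ ≤ corner ℓ c i ∧ corner ℓ c i ≤ ((c i : ℝ) + 1) * ℓ
      rw [corner_apply]
      exact ⟨le_refl _, by nlinarith⟩
    have h2 : (WithLp.toLp 2 (fun i => ((c i : ℝ) + 1) * ℓ) : EuclideanSpace ℝ (Fin d)) ∈ ccube ℓ c := by
      intro i
      show (c i : ℝ) * ℓ ≤ ((c i : ℝ) + 1) * ℓ ∧ ((c i : ℝ) + 1) * ℓ ≤ ((c i : ℝ) + 1) * ℓ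
      exact ⟨by nlinarith, le_refl _⟩
    have := Metric.dist_le_diam_of_mem hbdd h2 h1
    rw [EuclideanSpace.dist_eq] at this
    have heq : √(∑ i, dist (((c i : ℝ) + 1) * ℓ) (corner ℓ c i) ^ 2) = Real.sqrt d * ℓ := by
      have : ∀ i : Fin d, dist (((c i : ℝ) + 1) * ℓ) (corner ℓ c i) ^ 2 = ℓ ^ 2 := by
        intro i
        rw [Real.dist_eq]
        rw [corner_apply]
        rw [show ((c i : ℝ) + 1) * ℓ - (c i : ℝ) * ℓ = ℓ by ring, abs_of_nonneg hℓ]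
      rw [Finset.sum_congr rfl fun i _ => this i, Finset.sum_const, Finset.card_univ,
        Fintype.card_fin, nsmul_eq_mul, Real.sqrt_mul (by positivity), Real.sqrt_sq hℓ]
    rw [← heq]
    exact this

noncomputable def idx (ℓ : ℝ) (x : EuclideanSpace ℝ (Fin d)) : Fin d → ℤ := fun i => ⌊x i / ℓ⌋

lemma mem_cube_idx {ℓ : ℝ} (hℓ : 0 < ℓ) (x : EuclideanSpace ℝ (Fin d)) :
    x ∈ cube ℓ (idx ℓ x) := by
  rw [mem_cube_iff_floor hℓ]
  intro i; rfl



variable {d : ℕ}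

open Classical in
/-- mass after `k` merging steps -/
noncomputable def u (F : Finset (Fin d → ℤ)) (A : ℕ → ℝ) : ℕ → (Fin d → ℤ) → ℝ
  | 0 => fun c => if c ∈ F then A 0 else 0
  | (k+1) => fun c => u F A k c *
      min 1 (A (k+1) / ∑ c' ∈ F.filter (fun c'' => anc^[k+1] c'' = anc^[k+1] c), u F A k c')

variable {F : Finset (Fin d → ℤ)} {A : ℕ → ℝ}

lemma u_zero (c : Fin d → ℤ) : u F A 0 c = if c ∈ F then A 0 else 0 := rfl

lemma u_succ (k : ℕ) (c : Fin d → ℤ) :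
    u F A (k+1) c = u F A k c *
      min 1 (A (k+1) / ∑ c' ∈ F.filter (fun c'' => anc^[k+1] c'' = anc^[k+1] c), u F A k c') :=
  rfl

lemma u_nonneg (hA : ∀ k, 0 ≤ A k) : ∀ k c, 0 ≤ u F A k c := by
  intro k
  induction k with
  | zero => intro c; rw [u_zero]; split <;> simp [hA 0]
  | succ n ih =>
      intro c
      rw [u_succ]
      apply mul_nonneg (ih c)
      exact le_min zero_le_one
        (div_nonneg (hA (n+1)) (Finset.sum_nonneg fun c' _ => ih c'))

lemma u_succ_le (hA : ∀ k, 0 ≤ A k) (k : ℕ) (c : Fin d → ℤ) : u F A (k+1) c ≤ u F A k c := by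
  rw [u_succ]
  calc u F A k c * min 1 _ ≤ u F A k c * 1 :=
        mul_le_mul_of_nonneg_left (min_le_left _ _) (u_nonneg hA k c)
    _ = u F A k c := mul_one _

lemma u_le_of_le (hA : ∀ k, 0 ≤ A k) {k k' : ℕ} (h : k ≤ k') (c : Fin d → ℤ) :
    u F A k' c ≤ u F A k c := by
  induction k' with
  | zero => simp_all
  | succ n ih =>
      rcases Nat.lt_or_ge k (n+1) with h1 | h1
      · exact le_trans (u_succ_le hA n c) (ih (Nat.lt_succ_iff.mp h1))
      · have : k = n + 1 := le_antisymm h h1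
        subst this; rfl

lemma u_pos (hA : ∀ k, 0 < A k) {c : Fin d → ℤ} (hc : c ∈ F) : ∀ k, 0 < u F A k c := by
  intro k
  induction k with
  | zero => rw [u_zero, if_pos hc]; exact hA 0
  | succ n ih =>
      rw [u_succ]
      apply mul_pos ih
      apply lt_min one_pos
      apply div_pos (hA (n+1))
      apply lt_of_lt_of_le ih
      apply Finset.single_le_sum (f := fun c' => u F A n c')
        (fun c' _ => u_nonneg (fun k => (hA k).le) n c')
      exact Finset.mem_filter.2 ⟨hc, rfl⟩

lemma u_zero_of_not_mem {c : Fin d → ℤ} (hc : c ∉ F) : ∀ k, u F A k c = 0 := by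
  intro k
  induction k with
  | zero => rw [u_zero, if_neg hc]
  | succ n ih => rw [u_succ, ih, zero_mul]

/-- cluster sum after a merging step equals the min of previous sum and the cap -/
lemma cluster_sum_succ (hA : ∀ k, 0 ≤ A k) (k : ℕ) (a : Fin d → ℤ) :
    ∑ c ∈ F.filter (fun c' => anc^[k+1] c' = a), u F A (k+1) c
      = min (∑ c ∈ F.filter (fun c' => anc^[k+1] c' = a), u F A k c) (A (k+1)) := by
  classical
  set T := ∑ c ∈ F.filter (fun c' => anc^[k+1] c' = a), u F A k c with hT
  have hstep : ∀ c ∈ F.filter (fun c' => anc^[k+1] c' = a),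
      u F A (k+1) c = u F A k c * min 1 (A (k+1) / T) := by
    intro c hc
    rw [Finset.mem_filter] at hc
    rw [u_succ, hc.2, ← hT]
  rw [Finset.sum_congr rfl hstep, ← Finset.sum_mul, ← hT]
  by_cases h0 : T = 0
  · rw [h0, zero_mul]
    exact (min_eq_left (hA (k+1))).symm
  · have hTpos : 0 < T :=
      lt_of_le_of_ne (Finset.sum_nonneg fun c _ => u_nonneg hA k c) (Ne.symm h0)
    rcases le_total (A (k+1)) T with h1 | h1
    · rw [min_eq_right, min_eq_right h1]
      · field_simp
      · rw [div_le_one hTpos]; exact h1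
    · rw [min_eq_left, min_eq_left h1]
      · ring
      · rw [le_div_iff₀ hTpos]; linarith

/-- final cluster masses are at most the caps -/
lemma cluster_sum_le (hA : ∀ k, 0 ≤ A k) {m k : ℕ} (hk : k ≤ m) (a : Fin d → ℤ) :
    ∑ c ∈ F.filter (fun c' => anc^[k] c' = a), u F A m c ≤ A k := by
  classical
  have mono : ∑ c ∈ F.filter (fun c' => anc^[k] c' = a), u F A m c
      ≤ ∑ c ∈ F.filter (fun c' => anc^[k] c' = a), u F A k c :=
    Finset.sum_le_sum fun c _ => u_le_of_le hA hk c
  refine le_trans mono ?_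
  cases k with
  | zero =>
      simp only [Function.iterate_zero, id_eq]
      by_cases ha : a ∈ F
      · erw [Finset.filter_eq', if_pos ha, Finset.sum_singleton, u_zero, if_pos ha]
      · erw [Finset.filter_eq', if_neg ha, Finset.sum_empty]
        exact hA 0
  | succ n =>
      rw [cluster_sum_succ hA n a]
      exact min_le_right _ _

/-- every finest cube lies in some saturated cluster -/
lemma sat_exists (hA : ∀ k, 0 < A k) {c : Fin d → ℤ} (hc : c ∈ F) (m : ℕ) :
    ∃ k ≤ m, ∑ c' ∈ F.filter (fun c'' => anc^[k] c'' = anc^[k] c), u F A m c' = A k := by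
  classical
  have hA' : ∀ k, 0 ≤ A k := fun k => (hA k).le
  by_cases hdec : ∃ k, k < m ∧ u F A (k+1) c < u F A k c
  · obtain ⟨k₀, hk₀⟩ := hdec
    set P : ℕ → Prop := fun k => k < m ∧ u F A (k+1) c < u F A k c with hP
    set K := Nat.findGreatest P m with hK
    have hPK : P K := Nat.findGreatest_spec (le_of_lt hk₀.1) hk₀
    have hKm : K < m := hPK.1
    have hKgr : ∀ t, K < t → t ≤ m → ¬ P t := fun t h1 h2 => Nat.findGreatest_is_greatest h1 h2
    have hsatK : ∑ c' ∈ F.filter (fun c'' => anc^[K+1] c'' = anc^[K+1] c), u F A (K+1) c'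
        = A (K+1) := by
      rw [cluster_sum_succ hA' K (anc^[K+1] c)]
      set T := ∑ c' ∈ F.filter (fun c'' => anc^[K+1] c'' = anc^[K+1] c), u F A K c' with hT
      have hTpos : 0 < T := by
        apply lt_of_lt_of_le (u_pos hA hc K)
        apply Finset.single_le_sum (f := fun c' => u F A K c') (fun c' _ => u_nonneg hA' K c')
        exact Finset.mem_filter.2 ⟨hc, rfl⟩
      have hfac : min 1 (A (K+1) / T) < 1 := by
        by_contra hge
        push_neg at hge
        have hmin1 : min 1 (A (K+1) / T) = 1 := le_antisymm (min_le_left _ _) hge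
        have heq : u F A (K+1) c = u F A K c := by
          rw [u_succ, ← hT, hmin1, mul_one]
        exact absurd heq (ne_of_lt hPK.2)
      have hd1 : A (K+1) / T < 1 := by
        rcases min_cases 1 (A (K+1) / T) with ⟨h1, _⟩ | ⟨_, h2⟩
        · rw [h1] at hfac; exact absurd hfac (lt_irrefl 1)
        · exact h2
      have hAT : A (K+1) < T := by rwa [div_lt_one hTpos] at hd1
      exact min_eq_right hAT.le
    have hpres : ∀ t, K + 1 ≤ t → t ≤ m →
        ∑ c' ∈ F.filter (fun c'' => anc^[K+1] c'' = anc^[K+1] c), u F A t c' = A (K+1) := by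
      intro t
      induction t with
      | zero => intro h1 _; omega
      | succ n ih =>
          intro h1 h2
          rcases Nat.lt_or_ge (K+1) (n+1) with hlt | hge
          · have hKn : K + 1 ≤ n := Nat.lt_succ_iff.mp hlt
            have ihn := ih hKn (le_trans (Nat.le_succ n) h2)
            have hfac1 : min 1 (A (n+1) /
                ∑ c' ∈ F.filter (fun c'' => anc^[n+1] c'' = anc^[n+1] c), u F A n c') = 1 := by
              have hnP : ¬ P n := hKgr n (by omega) (by omega)
              have hne : u F A (n+1) c = u F A n c := by
                rcases lt_or_eq_of_le (u_succ_le hA' n c) with hlt' | heq'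
                · exact absurd ⟨by omega, hlt'⟩ hnP
                · exact heq'
              have hupos := u_pos hA hc n
              have hmm : u F A n c * min 1 (A (n+1) /
                  ∑ c' ∈ F.filter (fun c'' => anc^[n+1] c'' = anc^[n+1] c), u F A n c')
                  = u F A n c * 1 := by
                rw [mul_one, ← u_succ, hne]
              exact mul_left_cancel₀ (ne_of_gt hupos) hmm
            have hiter : ∀ z : Fin d → ℤ, anc^[n+1] z = anc^[n-K] (anc^[K+1] z) := by
              intro z
              rw [← Function.iterate_add_apply]
              congr 1
              omega
            have hstep : ∀ c' ∈ F.filter (fun c'' => anc^[K+1] c'' = anc^[K+1] c),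
                u F A (n+1) c' = u F A n c' := by
              intro c' hc'
              rw [Finset.mem_filter] at hc'
              have hanc : anc^[n+1] c' = anc^[n+1] c := by
                rw [hiter, hiter, hc'.2]
              rw [u_succ, hanc, hfac1, mul_one]
            rw [Finset.sum_congr rfl hstep]
            exact ihn
          · have hKn : K + 1 = n + 1 := le_antisymm h1 hge
            rw [← hKn]
            exact hsatK
    exact ⟨K + 1, hKm, hpres m hKm le_rfl⟩
  · push_neg at hdec
    have hconst : ∀ k ≤ m, u F A k c = A 0 := by
      intro k
      induction k with
      | zero => intro _; rw [u_zero, if_pos hc]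
      | succ n ih =>
          intro h
          have h1 := hdec n (by omega)
          have h3 : u F A (n+1) c = u F A n c :=
            le_antisymm (u_succ_le hA' n c) h1
          rw [h3, ih (by omega)]
    refine ⟨0, Nat.zero_le m, ?_⟩
    simp only [Function.iterate_zero, id_eq]
    erw [Finset.filter_eq', if_pos hc, Finset.sum_singleton, hconst m le_rfl]


set_option maxHeartbeats 1000000 in
lemma main {d : ℕ} (hd : 1 ≤ d) (E : Set (EuclideanSpace ℝ (Fin d))) (hE : IsCompact E)
    (hEne : E.Nonempty) (θ s ε₀ δ : ℝ) (hθ0 : 0 < θ) (hθ1 : θ ≤ 1) (hs : 0 < s)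
    (hε₀ : 0 < ε₀) (hδ0 : 0 < δ) (hδ1 : δ ≤ 1)
    (hnc : ¬ IsAdmissibleCover θ δ s ε₀ E) :
    ∃ μ : Measure (EuclideanSpace ℝ (Fin d)), IsProbabilityMeasure μ ∧ μ Eᶜ = 0 ∧
      ∀ x ∈ E, ∀ r : ℝ, δ ^ (1/θ) ≤ r → r ≤ δ →
        μ (Metric.ball x r) ≤ ENNReal.ofReal ((((2*(d:ℝ)+2)^d * (2:ℝ)^s) / ε₀) * r ^ s) := by
  classical
  have hsq1 : (1:ℝ) ≤ Real.sqrt d := Real.one_le_sqrt.2 (by exact_mod_cast hd)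
  have hsq0 : (0:ℝ) < Real.sqrt d := lt_of_lt_of_le one_pos hsq1
  have hsqd : Real.sqrt d ≤ (d:ℝ) := by
    have hd1 : (1:ℝ) ≤ (d:ℝ) := by exact_mod_cast hd
    have h1 : Real.sqrt d ≤ Real.sqrt ((d:ℝ)^2) := Real.sqrt_le_sqrt (by nlinarith)
    rwa [Real.sqrt_sq (by positivity)] at h1
  have hδθpos : (0:ℝ) < δ ^ (1/θ) := Real.rpow_pos_of_pos hδ0 _
  have hδθδ : δ ^ (1/θ) ≤ δ := by
    nth_rewrite 2 [show δ = δ ^ (1:ℝ) from (Real.rpow_one δ).symm]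
    exact Real.rpow_le_rpow_of_exponent_ge hδ0 hδ1 (by rw [le_div_iff₀ hθ0]; linarith)
  -- choice of the number of levels m
  obtain ⟨n₀, hn₀⟩ : ∃ n₀ : ℕ, δ * (1/2:ℝ)^n₀ < δ ^ (1/θ) := by
    obtain ⟨n, hn⟩ := exists_pow_lt_of_lt_one (div_pos hδθpos hδ0) (by norm_num : (1/2:ℝ) < 1)
    exact ⟨n, by rw [mul_comm]; exact (lt_div_iff₀ hδ0).1 hn⟩
  set m := Nat.findGreatest (fun k => δ ^ (1/θ) ≤ δ * (1/2:ℝ)^k) n₀ with hm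
  have hPm : δ ^ (1/θ) ≤ δ * (1/2:ℝ)^m :=
    Nat.findGreatest_spec (P := fun k => δ ^ (1/θ) ≤ δ * (1/2:ℝ)^k) (Nat.zero_le n₀)
      (by simpa using hδθδ)
  have hPm1 : δ * (1/2:ℝ)^m < 2 * δ ^ (1/θ) := by
    have hle : m ≤ n₀ := by rw [hm]; exact Nat.findGreatest_le n₀
    have hmn₀ : m < n₀ := by
      rcases lt_or_eq_of_le hle with h | h
      · exact h
      · exfalso; rw [h] at hPm; exact absurd hPm (not_le.2 hn₀)
    have hgr := Nat.findGreatest_is_greatest (P := fun k => δ ^ (1/θ) ≤ δ * (1/2:ℝ)^k)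
      (k := m + 1) (by omega) (by omega : m + 1 ≤ n₀)
    have hgr' : δ * (1/2:ℝ)^(m+1) < δ ^ (1/θ) := not_le.1 hgr
    calc δ * (1/2:ℝ)^m = 2 * (δ * (1/2)^(m+1)) := by ring
      _ < 2 * δ ^ (1/θ) := by linarith
  -- scales
  set ℓm : ℝ := δ * (1/2:ℝ)^m / Real.sqrt d with hℓm
  have hℓm0 : 0 < ℓm := by positivity
  set A : ℕ → ℝ := fun k => (δ * (1/2:ℝ)^m * 2^k) ^ s with hA
  have hApos : ∀ k, 0 < A k := fun k => Real.rpow_pos_of_pos (by positivity) s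
  have hA' : ∀ k, 0 ≤ A k := fun k => (hApos k).le
  have hDk : ∀ k, k ≤ m → δ * (1/2:ℝ)^m * 2^k = δ * (1/2)^(m-k) := by
    intro k hk
    have h1 : ((1:ℝ)/2)^m = (1/2)^(m-k) * (1/2)^k := by
      rw [← pow_add]; congr 1; omega
    have h2 : ((1:ℝ)/2)^k * 2^k = 1 := by
      rw [← mul_pow]; norm_num
    calc δ * (1/2:ℝ)^m * 2^k = δ * ((1/2:ℝ)^(m-k) * (1/2)^k) * 2^k := by rw [← h1]
      _ = δ * (1/2)^(m-k) * ((1/2:ℝ)^k * 2^k) := by ring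
      _ = δ * (1/2)^(m-k) := by rw [h2, mul_one]
  have hDk_le : ∀ k, k ≤ m → δ * (1/2:ℝ)^m * 2^k ≤ δ := by
    intro k hk
    rw [hDk k hk]
    nth_rewrite 2 [show δ = δ * 1 by ring]
    exact mul_le_mul_of_nonneg_left (pow_le_one₀ (by norm_num) (by norm_num)) hδ0.le
  have hDk_ge : ∀ k : ℕ, δ ^ (1/θ) ≤ δ * (1/2:ℝ)^m * 2^k := by
    intro k
    calc δ ^ (1/θ) ≤ δ * (1/2:ℝ)^m := hPm
      _ = δ * (1/2:ℝ)^m * 1 := (mul_one _).symm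
      _ ≤ δ * (1/2:ℝ)^m * 2^k :=
          mul_le_mul_of_nonneg_left (one_le_pow₀ (by norm_num)) (by positivity)
  have hsqne : Real.sqrt d ≠ 0 := ne_of_gt hsq0
  have hsqL : ∀ k : ℕ, Real.sqrt d * (2^k * ℓm) = δ * (1/2:ℝ)^m * 2^k := by
    intro k
    rw [hℓm]
    field_simp
  -- coordinates are dominated by the distance
  have habs : ∀ (x y : EuclideanSpace ℝ (Fin d)) (i : Fin d), |x i - y i| ≤ dist x y := by
    intro x y i
    rw [EuclideanSpace.dist_eq]
    calc |x i - y i| = √(dist (x i) (y i) ^ 2) := by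
          rw [Real.sqrt_sq_eq_abs, Real.dist_eq, abs_abs]
      _ ≤ √(∑ j, dist (x j) (y j) ^ 2) :=
          Real.sqrt_le_sqrt (Finset.single_le_sum (f := fun j => dist (x j) (y j) ^ 2)
            (fun j _ => sq_nonneg _) (Finset.mem_univ i))
  
  -- the finite set of finest cubes meeting E
  obtain ⟨R, hR⟩ := hE.isBounded.subset_closedBall 0
  set F : Finset (Fin d → ℤ) :=
    (Fintype.piFinset fun _ : Fin d => Finset.Icc ⌊-R/ℓm⌋ ⌊R/ℓm⌋).filter
      (fun c => (cube ℓm c ∩ E).Nonempty) with hF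
  have hmemF : ∀ x ∈ E, idx ℓm x ∈ F := by
    intro x hx
    rw [hF, Finset.mem_filter]
    refine ⟨?_, ⟨x, mem_cube_idx hℓm0 x, hx⟩⟩
    rw [Fintype.mem_piFinset]
    intro i
    have h1 : |x i| ≤ R := by
      have h0 := habs x 0 i
      have hx0 : dist x 0 ≤ R := mem_closedBall.1 (hR hx)
      have h2 : |x i - (0 : EuclideanSpace ℝ (Fin d)) i| ≤ R := h0.trans hx0
      simpa using h2
    rw [abs_le] at h1
    rw [Finset.mem_Icc]
    exact ⟨Int.floor_le_floor (by gcongr; exact h1.1), Int.floor_le_floor (by gcongr; exact h1.2)⟩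
  -- chosen points inside (cube ∩ E)
  set pt : (Fin d → ℤ) → EuclideanSpace ℝ (Fin d) :=
    fun c => if h : (cube ℓm c ∩ E).Nonempty then h.choose else hEne.choose with hptdef
  have hptE : ∀ c, pt c ∈ E := by
    intro c
    rw [hptdef]
    dsimp only
    split
    · next h => exact h.choose_spec.2
    · exact hEne.choose_spec
  have hptcube : ∀ c ∈ F, pt c ∈ cube ℓm c := by
    intro c hc
    rw [hF, Finset.mem_filter] at hc
    rw [hptdef]
    dsimp only
    rw [dif_pos hc.2]
    exact hc.2.choose_spec.1
  -- final weights
  have hw0 : ∀ c, 0 ≤ u F A m c := fun c => u_nonneg hA' m c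
  set M := ∑ c ∈ F, u F A m c with hM
  -- saturated clusters and the maximal ones
  set K : (Fin d → ℤ) → ℕ :=
    fun c => Nat.findGreatest
      (fun k => ∑ c' ∈ F.filter (fun c'' => anc^[k] c'' = anc^[k] c), u F A m c' = A k) m with hKdef
  have hKle : ∀ c, K c ≤ m := fun c => by rw [hKdef]; exact Nat.findGreatest_le m
  have hKspec : ∀ c ∈ F,
      ∑ c' ∈ F.filter (fun c'' => anc^[K c] c'' = anc^[K c] c), u F A m c' = A (K c) := by
    intro c hc
    obtain ⟨k, hk, hsat⟩ := sat_exists hApos hc m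
    exact Nat.findGreatest_spec (P := fun k => ∑ c' ∈ F.filter (fun c'' => anc^[k] c'' = anc^[k] c), u F A m c' = A k) hk hsat
  have hKmax : ∀ c, ∀ t, K c < t → t ≤ m →
      ¬ (∑ c' ∈ F.filter (fun c'' => anc^[t] c'' = anc^[t] c), u F A m c' = A t) :=
    fun c t h1 h2 => Nat.findGreatest_is_greatest h1 h2
  set 𝒮 : Finset (ℕ × (Fin d → ℤ)) := F.image (fun c => (K c, anc^[K c] c)) with h𝒮
  have h𝒮le : ∀ p ∈ 𝒮, p.1 ≤ m := by
    intro p hp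
    obtain ⟨c, _, rfl⟩ := Finset.mem_image.1 hp
    exact hKle c
  have h𝒮sat : ∀ p ∈ 𝒮, ∑ c' ∈ F.filter (fun c'' => anc^[p.1] c'' = p.2), u F A m c' = A p.1 := by
    intro p hp
    obtain ⟨c, hc, rfl⟩ := Finset.mem_image.1 hp
    exact hKspec c hc
  -- distinct maximal saturated cubes have disjoint fibers
  have key : ∀ p ∈ 𝒮, ∀ q ∈ 𝒮, p.1 ≤ q.1 → ∀ c₀ : Fin d → ℤ,
      anc^[p.1] c₀ = p.2 → anc^[q.1] c₀ = q.2 → p = q := by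
    intro p hp q hq hpq c₀ h1 h2
    have h3 : anc^[q.1 - p.1] p.2 = q.2 := by
      rw [← h1, ← h2, ← Function.iterate_add_apply]
      congr 1
      omega
    obtain ⟨cp, hcp, hcpe⟩ := Finset.mem_image.1 hp
    have hKcp : K cp = p.1 := congrArg Prod.fst hcpe
    have hcpe2 : anc^[p.1] cp = p.2 := by
      have := congrArg Prod.snd hcpe
      dsimp at this
      rwa [hKcp] at this
    have hancp : anc^[q.1] cp = q.2 := by
      have : anc^[q.1] cp = anc^[q.1 - p.1] (anc^[p.1] cp) := by
        rw [← Function.iterate_add_apply]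
        congr 1
        omega
      rw [this, hcpe2, h3]
    have hq1m : q.1 ≤ m := h𝒮le q hq
    by_cases hlt : p.1 < q.1
    · exfalso
      refine hKmax cp q.1 (by omega) hq1m ?_
      rw [hancp]
      exact h𝒮sat q hq
    · have he1 : p.1 = q.1 := le_antisymm hpq (not_lt.1 hlt)
      have he2 : p.2 = q.2 := by
        rw [← h3, he1]
        simp
      exact Prod.ext he1 he2
  have hdisj : (↑𝒮 : Set (ℕ × (Fin d → ℤ))).PairwiseDisjoint
      (fun p => F.filter (fun c => anc^[p.1] c = p.2)) := by
    intro p hp q hq hne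
    simp only [Function.onFun]
    rw [Finset.disjoint_left]
    intro c₀ hc₀p hc₀q
    rw [Finset.mem_filter] at hc₀p hc₀q
    rcases le_total p.1 q.1 with h | h
    · exact hne (key p hp q hq h c₀ hc₀p.2 hc₀q.2)
    · exact hne (key q hq p hp h c₀ hc₀q.2 hc₀p.2).symm
  have hcost_le_M : ∑ p ∈ 𝒮, A p.1 ≤ M := by
    have h1 : ∑ p ∈ 𝒮, A p.1
        = ∑ c ∈ 𝒮.biUnion (fun p => F.filter (fun c => anc^[p.1] c = p.2)), u F A m c := by
      rw [Finset.sum_biUnion hdisj]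
      exact (Finset.sum_congr rfl fun p hp => h𝒮sat p hp).symm
    rw [h1, hM]
    refine Finset.sum_le_sum_of_subset_of_nonneg ?_ (fun c _ _ => hw0 c)
    exact Finset.biUnion_subset.2 fun p _ => Finset.filter_subset _ _
  -- the maximal saturated cubes form a cover, giving the lower bound on M
  have hM_gt : ε₀ < M := by
    by_contra hMle
    push_neg at hMle
    apply hnc
    refine ⟨𝒮.card,
      fun i => ccube (2^((𝒮.equivFin.symm i : ℕ × (Fin d → ℤ)).1) * ℓm)
        (𝒮.equivFin.symm i : ℕ × (Fin d → ℤ)).2, ?_, ?_, ?_⟩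
    · intro x hx
      have hcF := hmemF x hx
      have hp𝒮 : (K (idx ℓm x), anc^[K (idx ℓm x)] (idx ℓm x)) ∈ 𝒮 :=
        Finset.mem_image_of_mem _ hcF
      rw [Set.mem_iUnion]
      refine ⟨𝒮.equivFin ⟨_, hp𝒮⟩, ?_⟩
      rw [Equiv.symm_apply_apply]
      exact cube_subset_ccube _ _
        (mem_cube_anc_iter hℓm0 (K (idx ℓm x)) (mem_cube_idx hℓm0 x))
    · intro i
      rw [diam_ccube (by positivity), hsqL]
      exact ⟨hDk_ge _, hDk_le _ (h𝒮le _ (𝒮.equivFin.symm i).2)⟩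
    · have hsum : ∑ i : Fin 𝒮.card,
          Metric.diam (ccube (2^((𝒮.equivFin.symm i : ℕ × (Fin d → ℤ)).1) * ℓm)
            (𝒮.equivFin.symm i : ℕ × (Fin d → ℤ)).2) ^ s = ∑ p ∈ 𝒮, A p.1 := by
        rw [← Finset.sum_coe_sort 𝒮 (fun p => A p.1)]
        refine Fintype.sum_equiv 𝒮.equivFin.symm _ _ fun i => ?_
        rw [diam_ccube (by positivity), hsqL]
      rw [hsum]
      exact le_trans hcost_le_M hMle
  have hMpos : 0 < M := lt_trans hε₀ hM_gt
  -- the ball estimate for the weights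
  have hball : ∀ (x : EuclideanSpace ℝ (Fin d)) (r : ℝ), δ^(1/θ) ≤ r → r ≤ δ →
      ∑ c ∈ F.filter (fun c => pt c ∈ Metric.ball x r), u F A m c
        ≤ (2*(d:ℝ)+2)^d * (2*r)^s := by
    intro x r hr1 hr2
    have hr0 : 0 < r := lt_of_lt_of_le hδθpos hr1
    set j := Nat.findGreatest (fun k => r ≤ δ * (1/2:ℝ)^k) m with hj
    have hjm : j ≤ m := by rw [hj]; exact Nat.findGreatest_le m
    have hPjj : r ≤ δ * (1/2:ℝ)^j :=
      Nat.findGreatest_spec (P := fun k => r ≤ δ * (1/2:ℝ)^k) (Nat.zero_le m)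
        (by simpa using hr2)
    have hD2r : δ * (1/2:ℝ)^j < 2*r := by
      rcases lt_or_eq_of_le hjm with h | h
      · have hgr := Nat.findGreatest_is_greatest (P := fun k => r ≤ δ * (1/2:ℝ)^k)
          (k := j + 1) (by omega) (by omega : j + 1 ≤ m)
        have hgr' : δ * (1/2:ℝ)^(j+1) < r := not_le.1 hgr
        calc δ * (1/2:ℝ)^j = 2 * (δ * (1/2)^(j+1)) := by ring
          _ < 2*r := by linarith
      · rw [h]
        calc δ*(1/2:ℝ)^m < 2*δ^(1/θ) := hPm1
          _ ≤ 2*r := by linarith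
    set k := m - j with hkdef
    have hkm : k ≤ m := by omega
    have hAk : A k = (δ * (1/2:ℝ)^j)^s := by
      simp only [hA]
      rw [hDk k hkm]
      congr 3
      omega
    set L := (2:ℝ)^k * ℓm with hL
    have hL0 : 0 < L := by positivity
    have hLD : Real.sqrt d * L = δ * (1/2:ℝ)^j := by
      rw [hL, hsqL, hDk k hkm]
      congr 2
      omega
    set G := (F.filter (fun c => pt c ∈ Metric.ball x r)).image (anc^[k]) with hG
    have hsum1 : ∑ c ∈ F.filter (fun c => pt c ∈ Metric.ball x r), u F A m c
        ≤ ∑ a ∈ G, ∑ c ∈ F.filter (fun c' => anc^[k] c' = a), u F A m c := by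
      have hdisjG : (↑G : Set (Fin d → ℤ)).PairwiseDisjoint
          (fun a => F.filter (fun c' => anc^[k] c' = a)) := by
        intro a _ b _ hab
        simp only [Function.onFun]
        rw [Finset.disjoint_left]
        intro c hca hcb
        rw [Finset.mem_filter] at hca hcb
        exact hab (hca.2 ▸ hcb.2 ▸ rfl)
      rw [← Finset.sum_biUnion hdisjG]
      refine Finset.sum_le_sum_of_subset_of_nonneg ?_ (fun c _ _ => hw0 c)
      intro c hc
      rw [Finset.mem_biUnion]
      refine ⟨anc^[k] c, Finset.mem_image_of_mem _ hc, ?_⟩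
      rw [Finset.mem_filter]
      exact ⟨(Finset.mem_filter.1 hc).1, rfl⟩
    have hinner : ∀ a ∈ G, ∑ c ∈ F.filter (fun c' => anc^[k] c' = a), u F A m c ≤ (2*r)^s := by
      intro a _
      refine le_trans (cluster_sum_le hA' hkm a) ?_
      rw [hAk]
      exact Real.rpow_le_rpow (by positivity) hD2r.le hs.le
    -- counting the clusters meeting the ball
    have hGsub : G ⊆ Fintype.piFinset
        (fun i => Finset.Icc (⌊(x i - r)/L - 1⌋ + 1) (⌈(x i + r)/L⌉ - 1)) := by
      intro a ha
      rw [hG, Finset.mem_image] at ha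
      obtain ⟨c, hc, rfl⟩ := ha
      rw [Finset.mem_filter] at hc
      have hyc : pt c ∈ cube L (anc^[k] c) := by
        rw [hL]
        exact mem_cube_anc_iter hℓm0 k (hptcube c hc.1)
      rw [Fintype.mem_piFinset]
      intro i
      obtain ⟨hy1, hy2⟩ := hyc i
      have habs' : |pt c i - x i| < r := lt_of_le_of_lt (habs (pt c) x i) (mem_ball.1 hc.2)
      rw [abs_lt] at habs'
      rw [Finset.mem_Icc]
      constructor
      · rw [Int.add_one_le_iff, Int.floor_lt]
        rw [sub_lt_iff_lt_add, div_lt_iff₀ hL0]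
        push_cast
        nlinarith [hy2]
      · rw [Int.le_sub_one_iff, Int.lt_ceil, lt_div_iff₀ hL0]
        nlinarith [hy1]
    have hcard : (G.card : ℝ) ≤ (2*(d:ℝ)+2)^d := by
      have h1 : G.card ≤ (2*d+2)^d := by
        calc G.card ≤ (Fintype.piFinset
              (fun i : Fin d => Finset.Icc (⌊(x i - r)/L - 1⌋ + 1) (⌈(x i + r)/L⌉ - 1))).card :=
            Finset.card_le_card hGsub
          _ = ∏ i : Fin d, (Finset.Icc (⌊(x i - r)/L - 1⌋ + 1) (⌈(x i + r)/L⌉ - 1)).card :=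
            Fintype.card_piFinset _
          _ ≤ ∏ _i : Fin d, (2*d+2) := Finset.prod_le_prod' (fun i _ => ?_)
          _ = (2*d+2)^d := by rw [Finset.prod_const, Finset.card_univ, Fintype.card_fin]
        -- per-coordinate cardinality bound
        rw [Int.card_Icc]
        rw [Int.toNat_le]
        have hrL : r / L ≤ Real.sqrt d := by
          rw [div_le_iff₀ hL0]
          rw [← hLD] at hPjj
          exact hPjj
        have hceil : (⌈(x i + r)/L⌉ : ℝ) < (x i + r)/L + 1 := Int.ceil_lt_add_one _
        have hfloor : (x i - r)/L - 1 - 1 < (⌊(x i - r)/L - 1⌋ : ℝ) := Int.sub_one_lt_floor _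
        have hdiff : (x i + r)/L - (x i - r)/L = 2*r/L := by
          field_simp
          ring
        have h2 : ((⌈(x i + r)/L⌉ - 1 + 1 - (⌊(x i - r)/L - 1⌋ + 1) : ℤ) : ℝ)
            < 2*(d:ℝ) + 2 := by
          push_cast
          have : 2*r/L ≤ 2*Real.sqrt d := by
            rw [mul_div_assoc]
            nlinarith [hrL]
          nlinarith [hceil, hfloor, hdiff, hsqd]
        have h3 : (⌈(x i + r)/L⌉ - 1 + 1 - (⌊(x i - r)/L - 1⌋ + 1) : ℤ) < 2*(d:ℤ) + 3 := by
          have : ((2*(d:ℝ) + 2 : ℝ)) ≤ ((2*(d:ℤ) + 3 : ℤ) : ℝ) := by push_cast; linarith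
          exact_mod_cast lt_of_lt_of_le h2 this
        push_cast
        omega
      calc (G.card : ℝ) ≤ (((2*d+2)^d : ℕ) : ℝ) := by exact_mod_cast h1
        _ = (2*(d:ℝ)+2)^d := by push_cast; ring
    calc ∑ c ∈ F.filter (fun c => pt c ∈ Metric.ball x r), u F A m c
        ≤ ∑ a ∈ G, ∑ c ∈ F.filter (fun c' => anc^[k] c' = a), u F A m c := hsum1
      _ ≤ ∑ _a ∈ G, (2*r)^s := Finset.sum_le_sum hinner
      _ = (G.card : ℝ) * (2*r)^s := by rw [Finset.sum_const, nsmul_eq_mul]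
      _ ≤ (2*(d:ℝ)+2)^d * (2*r)^s := by
          have h4 : (0:ℝ) ≤ (2*r)^s := Real.rpow_nonneg (by linarith) s
          nlinarith [hcard]
  -- the measure
  set ν : Measure (EuclideanSpace ℝ (Fin d)) :=
    ∑ c ∈ F, (ENNReal.ofReal (u F A m c)) • Measure.dirac (pt c) with hν
  have hνapp : ∀ t : Set (EuclideanSpace ℝ (Fin d)),
      ν t = ∑ c ∈ F, ENNReal.ofReal (u F A m c) * t.indicator 1 (pt c) := by
    intro t
    rw [hν, Measure.finset_sum_apply]
    exact Finset.sum_congr rfl fun c _ => by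
      rw [Measure.smul_apply, smul_eq_mul, Measure.dirac_apply]
  have hν_univ : ν Set.univ = ENNReal.ofReal M := by
    rw [hνapp]
    simp only [Set.indicator_univ, Pi.one_apply, mul_one]
    rw [hM, ENNReal.ofReal_sum_of_nonneg (fun c _ => hw0 c)]
  set μ := (ENNReal.ofReal M)⁻¹ • ν with hμ
  have hMne0 : ENNReal.ofReal M ≠ 0 := by
    simp [ENNReal.ofReal_eq_zero, not_le, hMpos]
  refine ⟨μ, ⟨?_⟩, ?_, ?_⟩
  · rw [hμ, Measure.smul_apply, smul_eq_mul, hν_univ,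
      ENNReal.inv_mul_cancel hMne0 ENNReal.ofReal_ne_top]
  · have hνE : ν Eᶜ = 0 := by
      rw [hνapp]
      refine Finset.sum_eq_zero fun c _ => ?_
      rw [Set.indicator_of_notMem (by simp [hptE c]), mul_zero]
    rw [hμ, Measure.smul_apply, smul_eq_mul, hνE, mul_zero]
  · intro x hx r hr1 hr2
    have hr0 : 0 < r := lt_of_lt_of_le hδθpos hr1
    have hνball : ν (Metric.ball x r)
        = ENNReal.ofReal (∑ c ∈ F.filter (fun c => pt c ∈ Metric.ball x r), u F A m c) := by
      rw [hνapp, ENNReal.ofReal_sum_of_nonneg (fun c _ => hw0 c),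
        Finset.sum_filter (s := F) (p := fun c => pt c ∈ Metric.ball x r)
          (f := fun c => ENNReal.ofReal (u F A m c))]
      refine Finset.sum_congr rfl fun c _ => ?_
      by_cases hmem : pt c ∈ Metric.ball x r
      · rw [if_pos hmem, Set.indicator_of_mem hmem, Pi.one_apply, mul_one]
      · rw [if_neg hmem, Set.indicator_of_notMem hmem, mul_zero]
    have h5 : μ (Metric.ball x r)
        ≤ (ENNReal.ofReal ε₀)⁻¹ * ENNReal.ofReal ((2*(d:ℝ)+2)^d * (2*r)^s) := by
      rw [hμ, Measure.smul_apply, smul_eq_mul, hνball]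
      exact mul_le_mul' (ENNReal.inv_le_inv' (ENNReal.ofReal_le_ofReal hM_gt.le))
        (ENNReal.ofReal_le_ofReal (hball x r hr1 hr2))
    refine le_trans h5 (le_of_eq ?_)
    rw [show (((2*(d:ℝ)+2)^d * (2:ℝ)^s) / ε₀) * r ^ s
        = ((2*(d:ℝ)+2)^d * (2*r)^s) / ε₀ by
      rw [Real.mul_rpow (by norm_num) hr0.le]
      ring]
    rw [ENNReal.ofReal_div_of_pos hε₀, div_eq_mul_inv, mul_comm]

end FrostmanAux

theorem frostman_upper_intermediate (d : ℕ) (E : Set (EuclideanSpace ℝ (Fin d)))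
    (hE : IsCompact E) (hEne : E.Nonempty) (θ : ℝ) (hθ : θ ∈ Set.Ioc (0 : ℝ) 1)
    (hdim : 0 < upperIntermediateDim θ E) :
    ∀ s : ℝ, 0 < s → s < upperIntermediateDim θ E →
      ∃ c > 0, ∀ δ₀ > 0, ∃ δ ∈ Set.Ioo (0 : ℝ) δ₀,
        ∃ μ : Measure (EuclideanSpace ℝ (Fin d)),
          IsProbabilityMeasure μ ∧ μ Eᶜ = 0 ∧
          ∀ x ∈ E, ∀ r : ℝ, δ ^ (1 / θ) ≤ r → r ≤ δ →
            μ (Metric.ball x r) ≤ ENNReal.ofReal (c * r ^ s) := by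
  intro s hs0 hsdim
  rcases Nat.eq_zero_or_pos d with hd0 | hd
  · -- dimension-zero ambient space: the hypothesis is contradictory
    exfalso
    subst hd0
    have hsub : Subsingleton (EuclideanSpace ℝ (Fin 0)) :=
      ⟨fun a b => WithLp.ofLp_injective 2 (funext fun i => Fin.elim0 i)⟩
    rw [upperIntermediateDim] at hdim
    have hS : {t : ℝ | 0 ≤ t ∧ ∀ ε > 0, ∃ δ₀ > 0, ∀ δ : ℝ, 0 < δ → δ ≤ δ₀ →
        IsAdmissibleCover θ δ t ε E} = ∅ := by
      ext t
      simp only [Set.mem_setOf_eq, Set.mem_empty_iff_false, iff_false]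
      rintro ⟨ht0, ht⟩
      obtain ⟨δ₀, hδ₀, hall⟩ := ht 1 one_pos
      obtain ⟨n, U, hcov, hdiam, -⟩ := hall δ₀ hδ₀ le_rfl
      obtain ⟨x, hx⟩ := hEne
      obtain ⟨i, hi⟩ := Set.mem_iUnion.1 (hcov hx)
      have h1 : δ₀ ^ (1/θ) ≤ Metric.diam (U i) := (hdiam i).1
      have h2 : Metric.diam (U i) = 0 :=
        Metric.diam_subsingleton (@Set.subsingleton_of_subsingleton _ hsub (U i))
      have h3 : 0 < δ₀ ^ (1/θ) := Real.rpow_pos_of_pos hδ₀ _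
      rw [h2] at h1
      exact absurd h1 (not_le.2 h3)
    rw [hS, Real.sInf_empty] at hdim
    exact lt_irrefl 0 hdim
  · have hθ0 : 0 < θ := hθ.1
    have hθ1 : θ ≤ 1 := hθ.2
    have hbdd : BddBelow {t : ℝ | 0 ≤ t ∧ ∀ ε > 0, ∃ δ₀ > 0, ∀ δ : ℝ, 0 < δ → δ ≤ δ₀ →
        IsAdmissibleCover θ δ t ε E} := ⟨0, fun t ht => ht.1⟩
    have hnotmem : s ∉ {t : ℝ | 0 ≤ t ∧ ∀ ε > 0, ∃ δ₀ > 0, ∀ δ : ℝ, 0 < δ → δ ≤ δ₀ →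
        IsAdmissibleCover θ δ t ε E} := by
      intro hmem
      have := csInf_le hbdd hmem
      rw [upperIntermediateDim] at hsdim
      exact absurd this (not_le.2 hsdim)
    have hQ : ¬ ∀ ε > 0, ∃ δ₀ > 0, ∀ δ : ℝ, 0 < δ → δ ≤ δ₀ →
        IsAdmissibleCover θ δ s ε E := fun h => hnotmem ⟨hs0.le, h⟩
    push_neg at hQ
    obtain ⟨ε₀, hε₀, hεall⟩ := hQ
    refine ⟨((2*(d:ℝ)+2)^d * (2:ℝ)^s) / ε₀, by positivity, ?_⟩
    intro δ₀ hδ₀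
    obtain ⟨δ, hδpos, hδle, hnc⟩ := hεall (min (δ₀/2) 1) (by positivity)
    have hδ1 : δ ≤ 1 := hδle.trans (min_le_right _ _)
    have hδδ₀ : δ < δ₀ := lt_of_le_of_lt (hδle.trans (min_le_left _ _)) (by linarith)
    obtain ⟨μ, hμ1, hμ2, hμ3⟩ := FrostmanAux.main hd E hE hEne θ s ε₀ δ hθ0 hθ1 hs0 hε₀
      hδpos hδ1 hnc
    exact ⟨δ, ⟨hδpos, hδδ₀⟩, μ, hμ1, hμ2, hμ3⟩
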